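/- arXiv:1704.00690 — 5 statements merged into one kernel-verified Lean document; each statement's English description precedes it below -/
import Mathlib

section
/- There exists a binary vector z ∈ F_2^n such that q(x) = 2·(z^T x) for all x ∈ L_q, where z^T x = Σ_{α=1}^n z_α x_α is computed modulo 2 and then lifted to Z_4. -/
open Finset

/-- The quadratic form q : F_2^n → Z_4. -/
def quadForm {n : ℕ} (A : Fin n → Fin n → ZMod 2) (b : Fin n → ZMod 2)
    (x : Fin n → ZMod 2) : ZMod 4 :=
  2 * ∑ p ∈ Finset.univ.filter (fun p : Fin n × Fin n => p.1 < p.2),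
      ((A p.1 p.2).val : ZMod 4) * ((x p.1).val : ZMod 4) * ((x p.2).val : ZMod 4)
  + ∑ α : Fin n, ((b α).val : ZMod 4) * ((x α).val : ZMod 4)

/-- The set L_q. -/
def Lset {n : ℕ} (A : Fin n → Fin n → ZMod 2) (b : Fin n → ZMod 2) :
    Set (Fin n → ZMod 2) :=
  {x | ∀ y, quadForm A b (x + y) = quadForm A b x + quadForm A b y}

/-- F_2 inner product. -/
def ip {n : ℕ} (z x : Fin n → ZMod 2) : ZMod 2 := ∑ α, z α * x α

/-- Halving map ZMod 4 → ZMod 2 on {0,2}. -/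
def halfMap (a : ZMod 4) : ZMod 2 := if a = 2 then 1 else 0

lemma halfMap_add (a c : ZMod 4) (ha : a + a = 0) (hc : c + c = 0) :
    halfMap (a + c) = halfMap a + halfMap c := by revert a c; decide

lemma halfMap_spec (a : ZMod 4) (ha : a + a = 0) :
    a = 2 * ((halfMap a).val : ZMod 4) := by revert a; decide

/-- There exists z ∈ F_2^n with q(x) = 2·(z^T x) for all x ∈ L_q,
the inner product being computed mod 2 and then lifted to Z_4. -/
theorem exists_hidden_linear_function (n : ℕ) (hn : 1 ≤ n)
    (A : Fin n → Fin n → ZMod 2) (b : Fin n → ZMod 2) :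
    ∃ z : Fin n → ZMod 2, ∀ x ∈ Lset A b,
      quadForm A b x = 2 * ((ip z x).val : ZMod 4) := by
  classical

  have hq0 : quadForm A b 0 = 0 := by simp [quadForm]
  have hzero : ∀ x : Fin n → ZMod 2, x + x = 0 := by
    intro x; funext α; exact CharTwo.add_self_eq_zero _
  have hdouble : ∀ x ∈ Lset A b, quadForm A b x + quadForm A b x = 0 := by
    intro x hx
    have := hx x
    rw [hzero x, hq0] at this
    exact this.symm
  -- L_q as a submodule
  have hc2 : ∀ c : ZMod 2, c = 0 ∨ c = 1 := by decide
  let L : Submodule (ZMod 2) (Fin n → ZMod 2) :=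
    { carrier := Lset A b
      add_mem' := by
        intro x y hx hy w
        have : x + y + w = x + (y + w) := by ring
        rw [this, hx, hy, hx]
        ring
      zero_mem' := by
        intro y
        rw [zero_add, hq0, zero_add]
      smul_mem' := by
        intro c x hx
        rcases hc2 c with h | h
        · subst h
          rw [zero_smul]
          intro y; rw [zero_add, hq0, zero_add]
        · subst h
          rw [one_smul]
          exact hx }
  have hmemL : ∀ x, x ∈ L ↔ x ∈ Lset A b := fun x => Iff.rfl
  -- the linear functional on L
  let φ : L →ₗ[ZMod 2] ZMod 2 :=
    { toFun := fun x => halfMap (quadForm A b x.val)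
      map_add' := by
        intro x y
        have hx := hdouble x.val x.property
        have hy := hdouble y.val y.property
        have hadd : quadForm A b (x.val + y.val) = quadForm A b x.val + quadForm A b y.val := x.property y.val
        show halfMap (quadForm A b (x.val + y.val)) = _
        rw [hadd, halfMap_add _ _ hx hy]
      map_smul' := by
        intro c x
        rcases hc2 c with h | h
        · subst h
          show halfMap (quadForm A b ((0 : ZMod 2) • x.val)) = 0 * halfMap (quadForm A b x.val)
          rw [zero_smul, hq0, zero_mul]
          rfl
        · subst h
          show halfMap (quadForm A b ((1 : ZMod 2) • x.val)) = 1 * halfMap (quadForm A b x.val)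
          rw [one_smul, one_mul] }
  obtain ⟨L', hcompl⟩ := Submodule.exists_isCompl L
  let g : (Fin n → ZMod 2) →ₗ[ZMod 2] ZMod 2 :=
    φ ∘ₗ (L.projectionOnto L' hcompl)
  have hg : ∀ x (hx : x ∈ L), g x = halfMap (quadForm A b x) := by
    intro x hx
    have := Submodule.projectionOnto_apply_left hcompl ⟨x, hx⟩
    simp only [g, LinearMap.comp_apply]
    rw [this]
    rfl
  refine ⟨fun α => g (fun j => if α = j then 1 else 0), ?_⟩
  intro x hx
  have hpi := LinearMap.pi_apply_eq_sum_univ g x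
  have hip : ip (fun α => g (fun j => if α = j then 1 else 0)) x = g x := by
    rw [hpi, ip]
    apply Finset.sum_congr rfl
    intro α _
    rw [smul_eq_mul, mul_comm]
  rw [hip, hg x hx]
  exact halfMap_spec _ (hdouble x hx)
end

section
/- Γ(L_q, z) = |L_q| if z is a solution of the Hidden Linear Function problem for q, and Γ(L_q, z) = 0 otherwise. -/
open Finset

/-- z is a solution of the Hidden Linear Function problem for q. -/
def IsSol {n : ℕ} (A : Fin n → Fin n → ZMod 2) (b : Fin n → ZMod 2)
    (z : Fin n → ZMod 2) : Prop :=
  ∀ x ∈ Lset A b, quadForm A b x = 2 * ((ip z x).val : ZMod 4)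

/-- The partial Fourier transform Γ(L, z). -/
noncomputable def Gamma {n : ℕ} (A : Fin n → Fin n → ZMod 2) (b : Fin n → ZMod 2)
    (L : Set (Fin n → ZMod 2)) (z : Fin n → ZMod 2) : ℂ :=
  ∑ x ∈ (Set.toFinite L).toFinset,
    (-1 : ℂ) ^ (ip z x).val * Complex.I ^ (quadForm A b x).val

-- helpers
lemma quadForm_zero {n : ℕ} (A : Fin n → Fin n → ZMod 2) (b : Fin n → ZMod 2) :
    quadForm A b 0 = 0 := by
  simp [quadForm]

lemma ip_add {n : ℕ} (z x y : Fin n → ZMod 2) : ip z (x + y) = ip z x + ip z y := by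
  simp [ip, mul_add, Finset.sum_add_distrib]

lemma I_pow_mod (m : ℕ) : (Complex.I) ^ (m % 4) = Complex.I ^ m := by
  conv_rhs => rw [← Nat.div_add_mod m 4]
  rw [pow_add, pow_mul, Complex.I_pow_four, one_pow, one_mul]

lemma neg_one_pow_mod (m : ℕ) : ((-1 : ℂ)) ^ (m % 2) = (-1) ^ m := by
  conv_rhs => rw [← Nat.div_add_mod m 2]
  rw [pow_add, pow_mul, neg_one_sq, one_pow, one_mul]

lemma I_pow_val_add (a c : ZMod 4) :
    Complex.I ^ (a + c).val = Complex.I ^ a.val * Complex.I ^ c.val := by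
  rw [ZMod.val_add, I_pow_mod, pow_add]

lemma neg_one_pow_val_add (a c : ZMod 2) :
    ((-1 : ℂ)) ^ (a + c).val = (-1) ^ a.val * (-1) ^ c.val := by
  rw [ZMod.val_add, neg_one_pow_mod, pow_add]


/-- Γ(L_q, z) = |L_q| if z is a solution of the Hidden Linear
Function problem for q, and Γ(L_q, z) = 0 otherwise. -/
theorem Gamma_Lq (n : ℕ) (hn : 1 ≤ n)
    (A : Fin n → Fin n → ZMod 2) (b : Fin n → ZMod 2) (z : Fin n → ZMod 2) :
    (IsSol A b z → Gamma A b (Lset A b) z = (Nat.card ↥(Lset A b) : ℂ)) ∧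
    (¬ IsSol A b z → Gamma A b (Lset A b) z = 0) := by
  have hfin := Set.toFinite (Lset A b)
  set S := hfin.toFinset with hS
  have hmem : ∀ x, x ∈ S ↔ x ∈ Lset A b := fun x => hfin.mem_toFinset
  -- q values on L are 0 or 2
  have hself : ∀ x : Fin n → ZMod 2, x + x = 0 := by
    intro x; funext α; simp [CharTwo.add_self_eq_zero]
  have hq02 : ∀ x ∈ Lset A b, quadForm A b x = 0 ∨ quadForm A b x = 2 := by
    intro x hx
    have h := hx x
    rw [hself x, quadForm_zero] at h
    have h2 : quadForm A b x + quadForm A b x = 0 := h.symm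
    revert h2
    generalize quadForm A b x = c
    revert c; decide
  constructor
  · intro hsol
    have hterm : ∀ x ∈ S,
        (-1 : ℂ) ^ (ip z x).val * Complex.I ^ (quadForm A b x).val = 1 := by
      intro x hx
      rw [hmem] at hx
      rw [hsol x hx]
      have : (ip z x).val = 0 ∨ (ip z x).val = 1 := by
        have := ZMod.val_lt (ip z x); omega
      rcases this with h | h <;> rw [h]
      · norm_num [show ((2 * ((0:ℕ) : ZMod 4)).val) = 0 from rfl]
      · rw [show (2 * ((1:ℕ) : ZMod 4)) = 2 by norm_num,
          show ((2:ZMod 4)).val = 2 from rfl]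
        simp [pow_two, Complex.I_mul_I]
    rw [Gamma, Finset.sum_congr rfl hterm, Finset.sum_const, nsmul_eq_mul, mul_one]
    congr 1
    rw [Nat.card_coe_set_eq, Set.ncard_eq_toFinset_card _ hfin]
  · intro hns
    rw [IsSol] at hns
    push_neg at hns
    obtain ⟨x0, hx0L, hx0⟩ := hns
    -- f x0 = -1
    have hf0 : (-1 : ℂ) ^ (ip z x0).val * Complex.I ^ (quadForm A b x0).val = -1 := by
      have hv : (ip z x0).val = 0 ∨ (ip z x0).val = 1 := by
        have := ZMod.val_lt (ip z x0); omega
      rcases hq02 x0 hx0L with hq | hq <;> rcases hv with hv | hv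
      · exact absurd (by rw [hq, hv]; norm_num) hx0
      · rw [hq, hv]; simp
      · rw [hq, hv, show ((2:ZMod 4)).val = 2 from rfl]
        simp [pow_two, Complex.I_mul_I]
      · exact absurd (by rw [hq, hv]; norm_num) hx0
    -- closure
    have hadd : ∀ x ∈ Lset A b, x0 + x ∈ Lset A b := by
      intro x hx y
      have h1 : quadForm A b (x0 + (x + y)) = quadForm A b x0 + quadForm A b (x + y) :=
        hx0L (x + y)
      rw [← add_assoc] at h1
      rw [h1, hx y, hx0L x, add_assoc]
    have hqadd : ∀ x ∈ Lset A b,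
        quadForm A b (x0 + x) = quadForm A b x0 + quadForm A b x := fun x _ => hx0L x
    set f : (Fin n → ZMod 2) → ℂ :=
      fun x => (-1 : ℂ) ^ (ip z x).val * Complex.I ^ (quadForm A b x).val with hfdef
    have hmul : ∀ x ∈ Lset A b, f (x0 + x) = - f x := by
      intro x hx
      simp only [hfdef]
      rw [hqadd x hx, ip_add, I_pow_val_add, neg_one_pow_val_add]
      have : ((-1:ℂ) ^ (ip z x0).val * (-1:ℂ) ^ (ip z x).val) *
          (Complex.I ^ (quadForm A b x0).val * Complex.I ^ (quadForm A b x).val)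
          = ((-1:ℂ) ^ (ip z x0).val * Complex.I ^ (quadForm A b x0).val) *
            ((-1:ℂ) ^ (ip z x).val * Complex.I ^ (quadForm A b x).val) := by ring
      rw [this, hf0]; ring
    have hbij : ∑ x ∈ S, f (x0 + x) = ∑ x ∈ S, f x := by
      apply Finset.sum_nbij' (i := fun x => x0 + x) (j := fun x => x0 + x)
      · intro a ha; rw [hmem] at ha ⊢; exact hadd a ha
      · intro a ha; rw [hmem] at ha ⊢; exact hadd a ha
      · intro a _; rw [← add_assoc, hself x0, zero_add]
      · intro a _; rw [← add_assoc, hself x0, zero_add]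
      · intro a _; rfl
    have hneg : ∑ x ∈ S, f (x0 + x) = - ∑ x ∈ S, f x := by
      rw [← Finset.sum_neg_distrib]
      exact Finset.sum_congr rfl fun x hx => hmul x ((hmem x).mp hx)
    have key : ∑ x ∈ S, f x = 0 := by
      have := hbij.symm.trans hneg
      linear_combination this / 2
    rw [Gamma]
    exact key
end

section
/- If K ⊆ F_2^n is a linear subspace with L_q + K = F_2^n and L_q ∩ K = {0}, then Γ(F_2^n, z) = Γ(L_q, z) · Γ(K, z) for every z ∈ F_2^n. -/
open Finset

lemma pow_val_add {k : ℕ} [NeZero k] (u : ℂ) (hu : u ^ k = 1) (a c : ZMod k) :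
    u ^ (a + c).val = u ^ a.val * u ^ c.val := by
  rw [ZMod.val_add, ← pow_add]
  conv_rhs => rw [← Nat.mod_add_div (a.val + c.val) k]
  rw [pow_add, pow_mul, hu, one_pow, mul_one]

lemma Lset_add {n : ℕ} {A : Fin n → Fin n → ZMod 2} {b : Fin n → ZMod 2}
    {x x' : Fin n → ZMod 2} (hx : x ∈ Lset A b) (hx' : x' ∈ Lset A b) :
    x + x' ∈ Lset A b := by
  intro y
  rw [add_assoc, hx, hx', hx, add_assoc]

lemma neg_self {n : ℕ} (v : Fin n → ZMod 2) : -v = v := by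
  funext i
  exact CharTwo.neg_eq _

/-- If K is a linear subspace with L_q + K = F_2^n and
L_q ∩ K = {0}, then Γ(F_2^n, z) = Γ(L_q, z) · Γ(K, z) for every z. -/
theorem Gamma_factorizes (n : ℕ) (hn : 1 ≤ n)
    (A : Fin n → Fin n → ZMod 2) (b : Fin n → ZMod 2)
    (K : Submodule (ZMod 2) (Fin n → ZMod 2))
    (hsum : ∀ v : Fin n → ZMod 2, ∃ x ∈ Lset A b, ∃ y ∈ K, v = x + y)
    (hint : Lset A b ∩ (K : Set (Fin n → ZMod 2)) = {0})
    (z : Fin n → ZMod 2) :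
    Gamma A b Set.univ z = Gamma A b (Lset A b) z * Gamma A b (K : Set (Fin n → ZMod 2)) z := by
  classical
  set f : (Fin n → ZMod 2) → ℂ :=
    fun v => (-1 : ℂ) ^ (ip z v).val * Complex.I ^ (quadForm A b v).val with hf
  have key : ∀ x ∈ Lset A b, ∀ y, f (x + y) = f x * f y := by
    intro x hx y
    simp only [hf]
    rw [hx y, ip_add, pow_val_add (-1 : ℂ) (by norm_num) , pow_val_add Complex.I Complex.I_pow_four]
    ring
  unfold Gamma
  rw [Finset.sum_mul_sum]
  rw [← Finset.sum_product']
  refine (Finset.sum_bij (fun p _ => p.1 + p.2) ?_ ?_ ?_ ?_).symm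
  · intro a ha
    simp [Set.Finite.mem_toFinset]
  · rintro ⟨x, y⟩ hxy ⟨x', y'⟩ hxy' h
    simp only [Finset.mem_product, Set.Finite.mem_toFinset, SetLike.mem_coe] at hxy hxy'
    obtain ⟨hx, hy⟩ := hxy
    obtain ⟨hx', hy'⟩ := hxy'
    have h' : x + y = x' + y' := h
    have h0 : ∀ v : Fin n → ZMod 2, v + v = 0 :=
      fun v => funext fun i => CharTwo.add_self_eq_zero (v i)
    have hxx : x + x' = y + y' := by
      linear_combination h' + h0 x' - h0 y
    have hmem : x + x' ∈ Lset A b ∩ (K : Set (Fin n → ZMod 2)) := by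
      constructor
      · exact Lset_add hx hx'
      · rw [hxx]; exact K.add_mem hy hy'
    rw [hint] at hmem
    have hx0 : x + x' = 0 := hmem
    have hxe : x = x' := by
      have := congrArg (· + x') hx0
      simpa [add_assoc, show x' + x' = 0 from funext fun i => CharTwo.add_self_eq_zero (x' i)] using this
    have hye : y = y' := by
      have hy0 : y + y' = 0 := by rw [← hxx]; exact hx0
      have := congrArg (· + y') hy0
      simpa [add_assoc, show y' + y' = 0 from funext fun i => CharTwo.add_self_eq_zero (y' i)] using this
    exact Prod.ext hxe hye
  · intro v hv
    obtain ⟨x, hx, y, hy, hxy⟩ := hsum v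
    refine ⟨(x, y), ?_, hxy.symm⟩
    exact Finset.mem_product.mpr ⟨(Set.Finite.mem_toFinset _).mpr hx, (Set.Finite.mem_toFinset _).mpr hy⟩
  · rintro ⟨x, y⟩ hxy
    simp only [Finset.mem_product, Set.Finite.mem_toFinset] at hxy
    exact (key x hxy.1 y).symm
end

section
/- If K ⊆ F_2^n is a linear subspace with L_q + K = F_2^n and L_q ∩ K = {0}, then the absolute value |Γ(K, z)| is independent of z; that is, |Γ(K, z)| = |Γ(K, z')| for all z, z' ∈ F_2^n. -/
open Finset

/-- The map F_2 → Z_4, s ↦ 2s, as an additive homomorphism. -/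
def e2 : ZMod 2 →+ ZMod 4 where
  toFun s := 2 * (s.val : ZMod 4)
  map_zero' := by decide
  map_add' := by decide

/-- The polar (bilinear) form associated to q. -/
def betaQ {n : ℕ} (A : Fin n → Fin n → ZMod 2) (b : Fin n → ZMod 2)
    (x y : Fin n → ZMod 2) : ZMod 2 :=
  (∑ p ∈ Finset.univ.filter (fun p : Fin n × Fin n => p.1 < p.2),
      A p.1 p.2 * (x p.1 * y p.2 + x p.2 * y p.1))
  + ∑ α : Fin n, b α * x α * y α

lemma tq (a u v w t : ZMod 2) :
    (2 : ZMod 4) * (((a.val : ZMod 4)) * (((u+w).val : ℕ) : ZMod 4) * (((v+t).val : ℕ) : ZMod 4)) =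
    2 * ((a.val : ZMod 4) * (u.val : ZMod 4) * (v.val : ZMod 4))
    + 2 * ((a.val : ZMod 4) * (w.val : ZMod 4) * (t.val : ZMod 4))
    + e2 (a * (u * t + v * w)) := by revert a u v w t; decide

lemma tl (c u w : ZMod 2) :
    ((c.val : ZMod 4)) * (((u+w).val : ℕ) : ZMod 4) =
    (c.val : ZMod 4) * (u.val : ZMod 4) + (c.val : ZMod 4) * (w.val : ZMod 4)
    + e2 (c * u * w) := by revert c u w; decide

lemma quad_add {n : ℕ} (A : Fin n → Fin n → ZMod 2) (b : Fin n → ZMod 2)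
    (x y : Fin n → ZMod 2) :
    quadForm A b (x + y) = quadForm A b x + quadForm A b y + e2 (betaQ A b x y) := by
  unfold quadForm betaQ
  simp only [Finset.mul_sum, Pi.add_apply, map_add, map_sum]
  rw [Finset.sum_congr rfl (fun p _ => tq (A p.1 p.2) (x p.1) (x p.2) (y p.1) (y p.2)),
      Finset.sum_congr rfl (fun α _ => tl (b α) (x α) (y α))]
  simp only [Finset.sum_add_distrib]
  ring

lemma betaQ_symm {n : ℕ} (A : Fin n → Fin n → ZMod 2) (b : Fin n → ZMod 2)
    (x y : Fin n → ZMod 2) : betaQ A b x y = betaQ A b y x := by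
  unfold betaQ
  congr 1
  · exact Finset.sum_congr rfl (fun p _ => by ring)
  · exact Finset.sum_congr rfl (fun α _ => by ring)

lemma betaQ_add_left {n : ℕ} (A : Fin n → Fin n → ZMod 2) (b : Fin n → ZMod 2)
    (x x' y : Fin n → ZMod 2) :
    betaQ A b (x + x') y = betaQ A b x y + betaQ A b x' y := by
  unfold betaQ
  rw [add_add_add_comm, ← Finset.sum_add_distrib, ← Finset.sum_add_distrib]
  congr 1
  · exact Finset.sum_congr rfl (fun p _ => by simp [Pi.add_apply]; ring)
  · exact Finset.sum_congr rfl (fun α _ => by simp [Pi.add_apply]; ring)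

lemma betaQ_smul_left {n : ℕ} (A : Fin n → Fin n → ZMod 2) (b : Fin n → ZMod 2)
    (c : ZMod 2) (x y : Fin n → ZMod 2) :
    betaQ A b (c • x) y = c * betaQ A b x y := by
  unfold betaQ
  rw [mul_add, Finset.mul_sum, Finset.mul_sum]
  congr 1
  · exact Finset.sum_congr rfl (fun p _ => by simp [Pi.smul_apply, smul_eq_mul]; ring)
  · exact Finset.sum_congr rfl (fun α _ => by simp [Pi.smul_apply, smul_eq_mul]; ring)

lemma e2_eq_zero_iff (s : ZMod 2) : e2 s = 0 ↔ s = 0 := by revert s; decide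

lemma mem_Lset_iff {n : ℕ} (A : Fin n → Fin n → ZMod 2) (b : Fin n → ZMod 2)
    (x : Fin n → ZMod 2) : x ∈ Lset A b ↔ ∀ y, betaQ A b x y = 0 := by
  constructor
  · intro h y
    have h1 := h y
    rw [quad_add] at h1
    have h2 : quadForm A b x + quadForm A b y + e2 (betaQ A b x y)
        = quadForm A b x + quadForm A b y + 0 := by rw [add_zero]; exact h1
    exact (e2_eq_zero_iff _).mp (add_left_cancel h2)
  · intro h y
    rw [quad_add, h y, map_zero, add_zero]

lemma ip_add_right {n : ℕ} (z y y' : Fin n → ZMod 2) :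
    ip z (y + y') = ip z y + ip z y' := by
  unfold ip
  rw [← Finset.sum_add_distrib]
  exact Finset.sum_congr rfl (fun α _ => by simp [Pi.add_apply]; ring)

lemma ip_smul_right {n : ℕ} (z : Fin n → ZMod 2) (c : ZMod 2) (y : Fin n → ZMod 2) :
    ip z (c • y) = c * ip z y := by
  unfold ip
  rw [Finset.mul_sum]
  exact Finset.sum_congr rfl (fun α _ => by simp [Pi.smul_apply, smul_eq_mul]; ring)

/-- Duality: every functional `ip z ·` on K is represented by some `t ∈ K` via `betaQ`. -/
lemma exists_t {n : ℕ} (A : Fin n → Fin n → ZMod 2) (b : Fin n → ZMod 2)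
    (K : Submodule (ZMod 2) (Fin n → ZMod 2))
    (hsum : ∀ v : Fin n → ZMod 2, ∃ x ∈ Lset A b, ∃ y ∈ K, v = x + y)
    (hint : Lset A b ∩ (K : Set (Fin n → ZMod 2)) = {0})
    (z : Fin n → ZMod 2) :
    ∃ t ∈ K, ∀ y ∈ K, ip z y = betaQ A b t y := by
  classical
  let φ : K →ₗ[ZMod 2] (K →ₗ[ZMod 2] ZMod 2) :=
    { toFun := fun t =>
        { toFun := fun y => betaQ A b (t : Fin n → ZMod 2) (y : Fin n → ZMod 2)
          map_add' := fun y y' => by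
            rw [betaQ_symm, Submodule.coe_add, betaQ_add_left,
              betaQ_symm A b (y : Fin n → ZMod 2), betaQ_symm A b (y' : Fin n → ZMod 2)]
          map_smul' := fun c y => by
            rw [betaQ_symm, SetLike.val_smul, betaQ_smul_left, betaQ_symm]
            simp }
      map_add' := fun t t' => by
        ext y
        simp [Submodule.coe_add, betaQ_add_left, LinearMap.add_apply]
      map_smul' := fun c t => by
        ext y
        simp [SetLike.val_smul, betaQ_smul_left, LinearMap.smul_apply, smul_eq_mul] }
  have hinj : Function.Injective φ := by
    rw [← LinearMap.ker_eq_bot, LinearMap.ker_eq_bot']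
    intro t ht
    have hK : ∀ y ∈ K, betaQ A b (t : Fin n → ZMod 2) y = 0 :=
      fun y hy => LinearMap.congr_fun ht ⟨y, hy⟩
    have hall : ∀ v, betaQ A b (t : Fin n → ZMod 2) v = 0 := by
      intro v
      obtain ⟨l, hl, k, hk, rfl⟩ := hsum v
      rw [betaQ_symm, betaQ_add_left, (mem_Lset_iff A b l).mp hl _,
        betaQ_symm A b k, hK k hk, add_zero]
    have htL : (t : Fin n → ZMod 2) ∈ Lset A b := (mem_Lset_iff A b _).mpr hall
    have ht0 : (t : Fin n → ZMod 2) ∈ Lset A b ∩ (K : Set (Fin n → ZMod 2)) := ⟨htL, t.2⟩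
    rw [hint] at ht0
    exact Subtype.ext ht0
  have hsurj : Function.Surjective φ := by
    have hfr : Module.finrank (ZMod 2) (K →ₗ[ZMod 2] ZMod 2) = Module.finrank (ZMod 2) K :=
      Subspace.dual_finrank_eq
    rw [← LinearMap.range_eq_top]
    apply Submodule.eq_top_of_finrank_eq
    rw [LinearMap.finrank_range_of_inj hinj, hfr]
  let ψ : K →ₗ[ZMod 2] ZMod 2 :=
    { toFun := fun y => ip z (y : Fin n → ZMod 2)
      map_add' := fun y y' => by rw [Submodule.coe_add, ip_add_right]
      map_smul' := fun c y => by rw [SetLike.val_smul, ip_smul_right]; simp }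
  obtain ⟨t, ht⟩ := hsurj ψ
  exact ⟨t, t.2, fun y hy => (LinearMap.congr_fun ht ⟨y, hy⟩).symm⟩

lemma Ipow_mod (k : ℕ) : Complex.I ^ (k % 4) = Complex.I ^ k := by
  conv_rhs => rw [← Nat.div_add_mod k 4]
  rw [pow_add, pow_mul, Complex.I_pow_four, one_pow, one_mul]

lemma Ipow_val_add (a c : ZMod 4) :
    Complex.I ^ ((a + c).val) = Complex.I ^ a.val * Complex.I ^ c.val := by
  rw [ZMod.val_add, Ipow_mod, pow_add]

lemma neg_one_pow_eq (s : ZMod 2) : (-1 : ℂ) ^ s.val = Complex.I ^ (e2 s).val := by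
  obtain h | h : s = 0 ∨ s = 1 := by revert s; decide
  all_goals subst h
  · rw [show ((0 : ZMod 2)).val = 0 from rfl, show (e2 0).val = 0 by decide]; rfl
  · rw [show ((1 : ZMod 2)).val = 1 from rfl, show (e2 1).val = 2 by decide]
    rw [pow_one, sq, Complex.I_mul_I]

/-- The absolute value of Γ(K, z), for z represented on K by t ∈ K, equals |Σ_{x∈K} i^{q x}|. -/
lemma abs_Gamma_eq {n : ℕ} (A : Fin n → Fin n → ZMod 2) (b : Fin n → ZMod 2)
    (K : Submodule (ZMod 2) (Fin n → ZMod 2)) (z : Fin n → ZMod 2)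
    (t : Fin n → ZMod 2) (htK : t ∈ K) (hip : ∀ y ∈ K, ip z y = betaQ A b t y) :
    ‖Gamma A b (K : Set (Fin n → ZMod 2)) z‖
      = ‖∑ x ∈ (Set.toFinite (K : Set (Fin n → ZMod 2))).toFinset,
          Complex.I ^ (quadForm A b x).val‖ := by
  unfold Gamma
  have hmem : ∀ x, x ∈ (Set.toFinite (K : Set (Fin n → ZMod 2))).toFinset ↔ x ∈ K := by
    intro x; rw [Set.Finite.mem_toFinset]; rfl
  have step : ∀ x ∈ (Set.toFinite (K : Set (Fin n → ZMod 2))).toFinset,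
      (-1 : ℂ) ^ (ip z x).val * Complex.I ^ (quadForm A b x).val
        = Complex.I ^ ((-(quadForm A b t)).val) * Complex.I ^ (quadForm A b (t + x)).val := by
    intro x hx
    rw [hip x ((hmem x).mp hx), neg_one_pow_eq, ← Ipow_val_add]
    have key : e2 (betaQ A b t x) + quadForm A b x
        = (-(quadForm A b t)) + quadForm A b (t + x) := by
      rw [quad_add]; ring
    rw [key, Ipow_val_add]
  rw [Finset.sum_congr rfl step, ← Finset.mul_sum]
  rw [norm_mul, norm_pow, Complex.norm_I, one_pow, one_mul]
  congr 1
  have hself : ∀ s : ZMod 2, s + s = 0 := by decide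
  have htt : t + t = 0 := by funext α; exact hself (t α)
  refine Finset.sum_nbij' (fun x => t + x) (fun x => t + x) ?_ ?_ ?_ ?_ ?_
  · intro x hx
    rw [hmem] at hx ⊢
    exact K.add_mem htK hx
  · intro x hx
    rw [hmem] at hx ⊢
    exact K.add_mem htK hx
  · intro x _; show t + (t + x) = x; rw [← add_assoc, htt, zero_add]
  · intro x _; show t + (t + x) = x; rw [← add_assoc, htt, zero_add]
  · intro x _; rfl

/-- If K is a linear subspace with L_q + K = F_2^n and
L_q ∩ K = {0}, then |Γ(K, z)| does not depend on z. -/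
theorem abs_Gamma_K_const (n : ℕ) (hn : 1 ≤ n)
    (A : Fin n → Fin n → ZMod 2) (b : Fin n → ZMod 2)
    (K : Submodule (ZMod 2) (Fin n → ZMod 2))
    (hsum : ∀ v : Fin n → ZMod 2, ∃ x ∈ Lset A b, ∃ y ∈ K, v = x + y)
    (hint : Lset A b ∩ (K : Set (Fin n → ZMod 2)) = {0})
    (z z' : Fin n → ZMod 2) :
    ‖Gamma A b (K : Set (Fin n → ZMod 2)) z‖
      = ‖Gamma A b (K : Set (Fin n → ZMod 2)) z'‖ := by
  obtain ⟨t, htK, hip⟩ := exists_t A b K hsum hint z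
  obtain ⟨t', htK', hip'⟩ := exists_t A b K hsum hint z'
  rw [abs_Gamma_eq A b K z t htK hip, abs_Gamma_eq A b K z' t' htK' hip']
end

section
/- Suppose e, f, g, h : F_2^3 → F_2 are affine boolean functions of x = (x_1, x_2, x_3) such that f does not depend on x_1, g does not depend on x_2, h does not depend on x_3, and f(x) ⊕ g(x) ⊕ h(x) is independent of x. Then the real number Σ_{x ∈ F_2^3, x_1 ⊕ x_2 ⊕ x_3 = 0} i^{x_1+x_2+x_3} · (−1)^{e(x) + f(x)·x_1 + g(x)·x_2 + h(x)·x_3} is at most 2. (Here the exponent of −1 is evaluated in F_2, the bits x_j in the exponent of i are lifted to integers, and since x_1+x_2+x_3 is even on the summation domain each summand equals ±1, so the sum is a real number.) -/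
open Finset

/-- A function F_2^3 → F_2 is affine if it is a constant plus a linear form. -/
def IsAffine (p : (Fin 3 → ZMod 2) → ZMod 2) : Prop :=
  ∃ (c₀ : ZMod 2) (c : Fin 3 → ZMod 2), ∀ x, p x = c₀ + ∑ i, c i * x i

/-- p does not depend on the j-th input bit. -/
def NotDependsOn (p : (Fin 3 → ZMod 2) → ZMod 2) (j : Fin 3) : Prop :=
  ∀ x, p (x + Pi.single j 1) = p x

lemma key_aux_affine_sum (a b c d : ZMod 2) (hsum : a + b + c + d = 0) :
    (((-1:ℂ)^a.val - (-1)^b.val - (-1)^c.val - (-1)^d.val).im = 0 ∧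
     ((-1:ℂ)^a.val - (-1)^b.val - (-1)^c.val - (-1)^d.val).re ≤ 2) := by
  fin_cases a <;> fin_cases b <;> fin_cases c <;> fin_cases d <;>
    first
      | (exact absurd hsum (by decide))
      | (constructor <;> norm_num [ZMod.val_one, ZMod.val])

/-- With e, f, g, h affine, f independent of x₁, g of x₂, h of x₃,
and f ⊕ g ⊕ h constant, the sum
Σ_{x₁⊕x₂⊕x₃=0} i^{x₁+x₂+x₃}·(−1)^{e(x)+f(x)x₁+g(x)x₂+h(x)x₃}
is a real number at most 2. -/
theorem affine_sum_le_two (e f g h : (Fin 3 → ZMod 2) → ZMod 2)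
    (he : IsAffine e) (hf : IsAffine f) (hg : IsAffine g) (hh : IsAffine h)
    (hf1 : NotDependsOn f 0) (hg2 : NotDependsOn g 1) (hh3 : NotDependsOn h 2)
    (hfgh : ∀ x y, f x + g x + h x = f y + g y + h y) :
    (∑ x ∈ Finset.univ.filter (fun x : Fin 3 → ZMod 2 => x 0 + x 1 + x 2 = 0),
        Complex.I ^ ((x 0).val + (x 1).val + (x 2).val) *
          (-1 : ℂ) ^ (e x + f x * x 0 + g x * x 1 + h x * x 2).val).im = 0 ∧
    (∑ x ∈ Finset.univ.filter (fun x : Fin 3 → ZMod 2 => x 0 + x 1 + x 2 = 0),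
        Complex.I ^ ((x 0).val + (x 1).val + (x 2).val) *
          (-1 : ℂ) ^ (e x + f x * x 0 + g x * x 1 + h x * x 2).val).re ≤ 2 := by
  obtain ⟨e0, ec, hE⟩ := he
  obtain ⟨f0, fc, hF⟩ := hf
  obtain ⟨g0, gc, hG⟩ := hg
  obtain ⟨h0, hc, hH⟩ := hh
  have hfc0 : fc 0 = 0 := by
    have := hf1 0
    simp [hF, Fin.sum_univ_three, Pi.single_apply] at this
    linear_combination this
  have hgc1 : gc 1 = 0 := by
    have := hg2 0
    simp [hG, Fin.sum_univ_three, Pi.single_apply] at this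
    linear_combination this
  have hhc2 : hc 2 = 0 := by
    have := hh3 0
    simp [hH, Fin.sum_univ_three, Pi.single_apply] at this
    linear_combination this
  have hsum0 : fc 0 + gc 0 + hc 0 = 0 := by
    have := hfgh (Pi.single 0 1) 0
    simp [hF, hG, hH, Fin.sum_univ_three, Pi.single_apply] at this
    linear_combination this
  have hsum1 : fc 1 + gc 1 + hc 1 = 0 := by
    have := hfgh (Pi.single 1 1) 0
    simp [hF, hG, hH, Fin.sum_univ_three, Pi.single_apply] at this
    linear_combination this
  have hsum2 : fc 2 + gc 2 + hc 2 = 0 := by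
    have := hfgh (Pi.single 2 1) 0
    simp [hF, hG, hH, Fin.sum_univ_three, Pi.single_apply] at this
    linear_combination this
  have hEq :
    (∑ x ∈ Finset.univ.filter (fun x : Fin 3 → ZMod 2 => x 0 + x 1 + x 2 = 0),
        Complex.I ^ ((x 0).val + (x 1).val + (x 2).val) *
          (-1 : ℂ) ^ (e x + f x * x 0 + g x * x 1 + h x * x 2).val)
    = (-1:ℂ)^(e ![0,0,0] + f ![0,0,0] * 0 + g ![0,0,0] * 0 + h ![0,0,0] * 0).val
      - (-1)^(e ![1,1,0] + f ![1,1,0] * 1 + g ![1,1,0] * 1 + h ![1,1,0] * 0).val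
      - (-1)^(e ![1,0,1] + f ![1,0,1] * 1 + g ![1,0,1] * 0 + h ![1,0,1] * 1).val
      - (-1)^(e ![0,1,1] + f ![0,1,1] * 0 + g ![0,1,1] * 1 + h ![0,1,1] * 1).val := by
    have hset : Finset.univ.filter (fun x : Fin 3 → ZMod 2 => x 0 + x 1 + x 2 = 0)
        = {![0,0,0], ![1,1,0], ![1,0,1], ![0,1,1]} := by decide
    rw [hset]
    rw [Finset.sum_insert (by decide), Finset.sum_insert (by decide),
        Finset.sum_insert (by decide), Finset.sum_singleton]
    norm_num [ZMod.val_one, Complex.I_sq, Matrix.cons_val_two, Matrix.tail_cons, Matrix.head_cons]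
    ring
  have two : (2:ZMod 2) = 0 := by decide
  rw [hEq]
  apply key_aux_affine_sum
  simp only [hE, hF, hG, hH, Fin.sum_univ_three, Matrix.cons_val_zero,
    Matrix.cons_val_one, Matrix.head_cons, Matrix.cons_val_two, Matrix.tail_cons]
  linear_combination hsum0 + hsum1 + hsum2 + hfc0 + hgc1 + hhc2 +
    (2*e0 + ec 0 + ec 1 + ec 2 + f0 + g0 + h0) * two
end
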